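/- Let Xbar = [-Xmax, Xmax]^p and let C be a finite (2*eps/sqrt(p))-grid of Xbar (i.e., points with coordinates in an arithmetic progression of step 2*eps/sqrt(p)), so that every point of Xbar is within Euclidean distance eps of C, and distinct points of C are at Euclidean distance at least 2*eps/sqrt(p). Let f0: Xbar -> R be L-Lipschitz. Define, with c = L*sqrt(p)/(2*eps), the function f_C(x) = max_{xhat in C} [ c*xhat^T(x - xhat) + (c/2)*||xhat||^2 + (1/2)*f0(xhat) ] - max_{xhat in C} [ c*xhat^T(x - xhat) + (c/2)*||xhat||^2 - (1/2)*f0(xhat) ]. Then f_C(xhat) = f0(xhat) for every xhat in C. -/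

import Mathlib

open scoped RealInnerProductSpace

/-- Interpolation property of the difference-of-max-affine construction: with
`c = L√p/(2ε)`, the function
`f_C(x) = max_{ẑ ∈ C}[c ẑ⬝(x-ẑ) + (c/2)‖ẑ‖² + f0(ẑ)/2] - max_{ẑ ∈ C}[c ẑ⬝(x-ẑ) + (c/2)‖ẑ‖² - f0(ẑ)/2]`
interpolates `f0` on the grid `C`. -/
theorem stmt4 (p : ℕ) (hp : 0 < p) (Xmax ε L : ℝ) (hε : 0 < ε) (hL : 0 ≤ L)
    (Xbar : Set (EuclideanSpace ℝ (Fin p)))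
    (hXbar : Xbar = {x : EuclideanSpace ℝ (Fin p) | ∀ i, |x i| ≤ Xmax})
    (C : Finset (EuclideanSpace ℝ (Fin p))) (hCne : C.Nonempty)
    (hsub : ↑C ⊆ Xbar)
    (hcover : ∀ x ∈ Xbar, ∃ xhat ∈ C, ‖x - xhat‖ ≤ ε)
    (hsep : ∀ x ∈ C, ∀ y ∈ C, x ≠ y → 2 * ε / Real.sqrt p ≤ ‖x - y‖)
    (f0 : EuclideanSpace ℝ (Fin p) → ℝ)
    (hlip : ∀ x ∈ Xbar, ∀ y ∈ Xbar, |f0 x - f0 y| ≤ L * ‖x - y‖) :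
    ∀ xhat ∈ C,
      (C.sup' hCne fun z => (L * Real.sqrt p / (2 * ε)) * ⟪z, xhat - z⟫
          + (L * Real.sqrt p / (2 * ε)) / 2 * ‖z‖ ^ 2 + f0 z / 2)
      - (C.sup' hCne fun z => (L * Real.sqrt p / (2 * ε)) * ⟪z, xhat - z⟫
          + (L * Real.sqrt p / (2 * ε)) / 2 * ‖z‖ ^ 2 - f0 z / 2)
      = f0 xhat := by
  intro xhat hx
  set c : ℝ := L * Real.sqrt p / (2 * ε) with hc
  have hsp : 0 < Real.sqrt p := Real.sqrt_pos.2 (by exact_mod_cast hp)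
  have hquad : ∀ z : EuclideanSpace ℝ (Fin p),
      c * ⟪z, xhat - z⟫ + c / 2 * ‖z‖ ^ 2 = c / 2 * ‖xhat‖ ^ 2 - c / 2 * ‖xhat - z‖ ^ 2 := by
    intro z
    have h1 : ‖xhat - z‖ ^ 2 = ‖xhat‖ ^ 2 - 2 * ⟪xhat, z⟫ + ‖z‖ ^ 2 := norm_sub_sq_real xhat z
    have h2 : ⟪z, xhat - z⟫ = ⟪xhat, z⟫ - ‖z‖ ^ 2 := by
      rw [inner_sub_right, real_inner_comm, real_inner_self_eq_norm_sq]
    rw [h2, h1]; ring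
  -- key bound
  have key : ∀ z ∈ C, |f0 z - f0 xhat| ≤ c * ‖xhat - z‖ ^ 2 := by
    intro z hz
    rcases eq_or_ne z xhat with rfl | hne
    · simp [abs_nonneg]
    · have hd : 2 * ε / Real.sqrt p ≤ ‖xhat - z‖ := hsep xhat hx z hz (Ne.symm hne)
      have hlipb : |f0 z - f0 xhat| ≤ L * ‖z - xhat‖ :=
        hlip z (hsub hz) xhat (hsub hx)
      rw [norm_sub_rev] at hlipb
      refine hlipb.trans ?_
      have hL' : L = c * (2 * ε / Real.sqrt p) := by
        field_simp [hc]
        rw [hc]; field_simp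
      have hn : 0 ≤ ‖xhat - z‖ := norm_nonneg _
      have hcpos : 0 ≤ c := by positivity
      calc L * ‖xhat - z‖ = c * (2 * ε / Real.sqrt p) * ‖xhat - z‖ := by rw [← hL']
        _ ≤ c * ‖xhat - z‖ * ‖xhat - z‖ := by
            apply mul_le_mul_of_nonneg_right _ hn
            exact mul_le_mul_of_nonneg_left hd hcpos
        _ = c * ‖xhat - z‖ ^ 2 := by ring
  have habs : ∀ z ∈ C, ∀ s : ℝ, |s| = 1 →
      c * ⟪z, xhat - z⟫ + c / 2 * ‖z‖ ^ 2 + s * f0 z / 2 ≤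
        c * ⟪xhat, xhat - xhat⟫ + c / 2 * ‖xhat‖ ^ 2 + s * f0 xhat / 2 := by
    intro z hz s hs
    rw [hquad z, hquad xhat]
    simp only [sub_self, norm_zero]
    have h1 : s * f0 z - s * f0 xhat ≤ |f0 z - f0 xhat| := by
      calc s * f0 z - s * f0 xhat = s * (f0 z - f0 xhat) := by ring
        _ ≤ |s * (f0 z - f0 xhat)| := le_abs_self _
        _ = |f0 z - f0 xhat| := by rw [abs_mul, hs, one_mul]
    have := (key z hz)
    nlinarith
  have sup_eq : ∀ s : ℝ, |s| = 1 →
      (C.sup' hCne fun z => c * ⟪z, xhat - z⟫ + c / 2 * ‖z‖ ^ 2 + s * f0 z / 2)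
        = c / 2 * ‖xhat‖ ^ 2 + s * f0 xhat / 2 := by
    intro s hs
    apply le_antisymm
    · apply Finset.sup'_le
      intro z hz
      have := habs z hz s hs
      simpa [sub_self, inner_zero_right] using this
    · have := Finset.le_sup' (f := fun z => c * ⟪z, xhat - z⟫ + c / 2 * ‖z‖ ^ 2 + s * f0 z / 2) hx
      simp only [sub_self, inner_zero_right, mul_zero, zero_add] at this; exact this
  have e1 := sup_eq 1 (by norm_num)
  have e2 := sup_eq (-1) (by norm_num)
  simp only [one_mul, neg_one_mul, neg_div] at e1 e2
  have r1 : (C.sup' hCne fun z => c * ⟪z, xhat - z⟫ + c / 2 * ‖z‖ ^ 2 + f0 z / 2)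
      = c / 2 * ‖xhat‖ ^ 2 + f0 xhat / 2 := e1
  have r2 : (C.sup' hCne fun z => c * ⟪z, xhat - z⟫ + c / 2 * ‖z‖ ^ 2 - f0 z / 2)
      = c / 2 * ‖xhat‖ ^ 2 - f0 xhat / 2 := by
    rw [show (fun z => c * ⟪z, xhat - z⟫ + c / 2 * ‖z‖ ^ 2 - f0 z / 2)
        = (fun z => c * ⟪z, xhat - z⟫ + c / 2 * ‖z‖ ^ 2 + -(f0 z / 2)) from by
      funext z; ring]
    rw [e2]; ring
  rw [r1, r2]; ring
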